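/- Let R be a 2-torsion free prime ring with involution * of the second kind (Z(R) ∩ S(R) ≠ {0}), and let d₁ and d₂ be nonzero derivations of R. Then d₁(x)d₂(x*) ∈ Z(R) for all x ∈ R if and only if R is an integral domain. -/

import Mathlib

section St11Aux
variable {R : Type*} [Ring R]

theorem st11_czero (hprime : ∀ a b : R, (∀ r : R, a * r * b = 0) → a = 0 ∨ b = 0)
    (c w : R) (hc : ∀ t : R, c * t = t * c) (hc0 : c ≠ 0) (h : c * w = 0) : w = 0 := by
  rcases hprime c w (fun t => by rw [hc t, mul_assoc, h, mul_zero]) with h' | h'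
  · exact absurd h' hc0
  · exact h'

theorem st11_stripC (hprime : ∀ a b : R, (∀ r : R, a * r * b = 0) → a = 0 ∨ b = 0)
    (c z : R) (hc : ∀ t : R, c * t = t * c) (hc0 : c ≠ 0)
    (h : ∀ r : R, (c * z) * r = r * (c * z)) : ∀ r : R, z * r = r * z := by
  intro r
  have key : c * (z * r - r * z) = 0 := by
    rw [mul_sub, sub_eq_zero, ← mul_assoc, h r, ← mul_assoc, ← hc, mul_assoc]
  exact sub_eq_zero.mp (st11_czero hprime c _ hc hc0 key)

theorem st11_strip2 (h2tor : ∀ a : R, 2 * a = 0 → a = 0)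
    (z : R) (h : ∀ r : R, (z + z) * r = r * (z + z)) : ∀ r : R, z * r = r * z := by
  intro r
  have h' := h r
  rw [add_mul, mul_add] at h'
  have : 2 * (z * r - r * z) = 0 := by
    rw [two_mul]; abel_nf; linear_combination (norm := noncomm_ring) h'
  exact sub_eq_zero.mp (h2tor _ this)

theorem st11_Csub {a b : R} (ha : ∀ r : R, a * r = r * a) (hb : ∀ r : R, b * r = r * b) :
    ∀ r : R, (a - b) * r = r * (a - b) := fun r => by
  rw [sub_mul, mul_sub, ha r, hb r]

theorem st11_Cadd {a b : R} (ha : ∀ r : R, a * r = r * a) (hb : ∀ r : R, b * r = r * b) :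
    ∀ r : R, (a + b) * r = r * (a + b) := fun r => by
  rw [add_mul, mul_add, ha r, hb r]

theorem st11_Cofneg {a : R} (ha : ∀ r : R, (-a) * r = r * (-a)) :
    ∀ r : R, a * r = r * a := fun r => by
  have := ha r
  rw [neg_mul, mul_neg] at this
  exact neg_injective this

theorem st11_CmulC {c z : R} (hc : ∀ r : R, c * r = r * c) (hz : ∀ r : R, z * r = r * z) :
    ∀ r : R, (c * z) * r = r * (c * z) := fun r => by
  rw [mul_assoc, hz r, ← mul_assoc, hc r, mul_assoc]

theorem st11_derivC (d : R → R) (hd_mul : ∀ x y : R, d (x * y) = d x * y + x * d y)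
    {s : R} (hs : ∀ r : R, s * r = r * s) : ∀ r : R, d s * r = r * d s := by
  intro r
  have h1 : d (s * r) = d s * r + s * d r := hd_mul s r
  have h2 : d (r * s) = d r * s + r * d s := hd_mul r s
  rw [hs r] at h1
  have h3 : d s * r + s * d r = d r * s + r * d s := h1.symm.trans h2
  rw [hs (d r)] at h3
  have h4 : d s * r + d r * s = r * d s + d r * s := by rw [h3]; abel
  exact add_right_cancel h4

theorem st11_dzero (d : R → R) (hd_add : ∀ x y : R, d (x + y) = d x + d y) : d 0 = 0 := by
  have h := hd_add 0 0
  rw [add_zero] at h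
  exact left_eq_add.mp h

theorem st11_dneg (d : R → R) (hd_add : ∀ x y : R, d (x + y) = d x + d y) (z : R) :
    d (-z) = - d z := by
  have h := hd_add z (-z)
  rw [add_neg_cancel, st11_dzero d hd_add] at h
  exact eq_neg_of_add_eq_zero_right h.symm

end St11Aux

/-- Corollary 8.
Let `R` be a 2-torsion free prime ring with involution `*` of the second kind, and let
`d₁, d₂` be nonzero derivations of `R`.  Then `d₁(x)d₂(x*) ∈ Z(R)` for all `x ∈ R` if
and only if `R` is an integral domain. -/
theorem statement11 {R : Type*} [Ring R] [StarRing R]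
    (hprime : ∀ a b : R, (∀ r : R, a * r * b = 0) → a = 0 ∨ b = 0)
    (h2tor : ∀ a : R, 2 * a = 0 → a = 0)
    (hsecond : ∃ s : R, (∀ r : R, s * r = r * s) ∧ star s = -s ∧ s ≠ 0)
    (d₁ d₂ : R → R)
    (hd₁_add : ∀ x y : R, d₁ (x + y) = d₁ x + d₁ y)
    (hd₁_mul : ∀ x y : R, d₁ (x * y) = d₁ x * y + x * d₁ y)
    (hd₂_add : ∀ x y : R, d₂ (x + y) = d₂ x + d₂ y)
    (hd₂_mul : ∀ x y : R, d₂ (x * y) = d₂ x * y + x * d₂ y)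
    (hd₁_ne : ∃ x : R, d₁ x ≠ 0) (hd₂_ne : ∃ x : R, d₂ x ≠ 0) :
    (∀ x r : R, (d₁ x * d₂ (star x)) * r = r * (d₁ x * d₂ (star x)))
      ↔ ((0 : R) ≠ 1 ∧ (∀ a b : R, a * b = b * a) ∧
          (∀ a b : R, a * b = 0 → a = 0 ∨ b = 0)) := by
  constructor
  · intro hH
    obtain ⟨s, hs_c, hss, hs0⟩ := hsecond
    -- nontriviality
    have h01 : (0 : R) ≠ 1 := by
      intro h
      obtain ⟨x₀, hx₀⟩ := hd₁_ne
      apply hx₀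
      calc d₁ x₀ = d₁ x₀ * 1 := (mul_one _).symm
        _ = d₁ x₀ * 0 := by rw [← h]
        _ = 0 := mul_zero _
    -- moving lemmas
    have hαc : ∀ r : R, d₂ s * r = r * d₂ s := st11_derivC d₂ hd₂_mul hs_c
    have S1 : ∀ u v : R, u * (s * v) = s * (u * v) := fun u v => by
      rw [← mul_assoc, ← hs_c, mul_assoc]
    have A1 : ∀ u v : R, u * (d₂ s * v) = d₂ s * (u * v) := fun u v => by
      rw [← mul_assoc, ← hαc, mul_assoc]
    have O1 : ∀ v : R, s * (d₂ s * v) = d₂ s * (s * v) := fun v => by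
      rw [← mul_assoc, ← hαc, mul_assoc]
    have B1 : ∀ v : R, s * (d₁ s * v) = d₁ s * (s * v) := fun v => by
      rw [← mul_assoc, hs_c (d₁ s), mul_assoc]
    have hstar_s : ∀ y : R, star (s * y) = -(s * star y) := fun y => by
      rw [star_mul, hss, mul_neg, ← hs_c]
    have hd₂s : ∀ y : R, d₂ (star (s * y)) = -(d₂ s * star y + s * d₂ (star y)) := fun y => by
      rw [hstar_s, st11_dneg d₂ hd₂_add, hd₂_mul]
    -- Step 1: linearization
    have hG : ∀ x y : R, ∀ r : R,
        (d₁ x * d₂ (star y) + d₁ y * d₂ (star x)) * r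
          = r * (d₁ x * d₂ (star y) + d₁ y * d₂ (star x)) := by
      intro x y
      have e2 : d₁ (x + y) * d₂ (star (x + y)) - d₁ x * d₂ (star x) - d₁ y * d₂ (star y)
          = d₁ x * d₂ (star y) + d₁ y * d₂ (star x) := by
        rw [star_add, hd₁_add, hd₂_add]; noncomm_ring
      intro r
      have h := st11_Csub (st11_Csub (hH (x + y)) (hH x)) (hH y) r
      rwa [e2] at h
    -- Step 2: D-identity
    have hD : ∀ x y : R, ∀ r : R,
        (d₂ s * (d₁ x * star y) - d₁ s * (y * d₂ (star x))
          + (s * (d₁ x * d₂ (star y)) + s * (d₁ x * d₂ (star y)))) * r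
        = r * (d₂ s * (d₁ x * star y) - d₁ s * (y * d₂ (star x))
          + (s * (d₁ x * d₂ (star y)) + s * (d₁ x * d₂ (star y)))) := by
      intro x y
      have h1 := st11_CmulC hs_c (hG x y)
      have h2 := hG x (s * y)
      have h3 := st11_Csub h1 h2
      have e : s * (d₁ x * d₂ (star y) + d₁ y * d₂ (star x))
          - (d₁ x * d₂ (star (s * y)) + d₁ (s * y) * d₂ (star x))
          = d₂ s * (d₁ x * star y) - d₁ s * (y * d₂ (star x))
          + (s * (d₁ x * d₂ (star y)) + s * (d₁ x * d₂ (star y))) := by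
        rw [hd₂s y, hd₁_mul s y, mul_neg, mul_add (d₁ x) (d₂ s * star y) (s * d₂ (star y)), A1 (d₁ x) (star y), S1 (d₁ x) (d₂ (star y))]
        noncomm_ring
      intro r
      have h := h3 r
      rwa [e] at h
    -- Step 3: F-identity
    have hF : ∀ x y : R, ∀ r : R,
        (d₂ s * (d₁ x * star y) + s * (d₁ x * d₂ (star y))) * r
        = r * (d₂ s * (d₁ x * star y) + s * (d₁ x * d₂ (star y))) := by
      intro x y
      have h1 := st11_CmulC hs_c (hD x y)
      have h2 := hD x (s * y)
      have h3 := st11_Csub h1 h2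
      have e : s * (d₂ s * (d₁ x * star y) - d₁ s * (y * d₂ (star x))
            + (s * (d₁ x * d₂ (star y)) + s * (d₁ x * d₂ (star y))))
          - (d₂ s * (d₁ x * star (s * y)) - d₁ s * ((s * y) * d₂ (star x))
            + (s * (d₁ x * d₂ (star (s * y))) + s * (d₁ x * d₂ (star (s * y)))))
          = (s * (d₂ s * (d₁ x * star y) + s * (d₁ x * d₂ (star y)))
              + s * (d₂ s * (d₁ x * star y) + s * (d₁ x * d₂ (star y))))
            + (s * (d₂ s * (d₁ x * star y) + s * (d₁ x * d₂ (star y)))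
              + s * (d₂ s * (d₁ x * star y) + s * (d₁ x * d₂ (star y)))) := by
        rw [hd₂s y, hstar_s y]
        rw [mul_neg (d₁ x) (s * star y), S1 (d₁ x) (star y)]
        rw [mul_neg (d₂ s), ← O1 (d₁ x * star y)]
        rw [mul_assoc s y (d₂ (star x)), ← B1 (y * d₂ (star x))]
        rw [mul_neg (d₁ x) (d₂ s * star y + s * d₂ (star y)),
          mul_add (d₁ x) (d₂ s * star y) (s * d₂ (star y)),
          A1 (d₁ x) (star y), S1 (d₁ x) (d₂ (star y))]
        noncomm_ring
      have h4 : ∀ r : R,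
          ((s * (d₂ s * (d₁ x * star y) + s * (d₁ x * d₂ (star y)))
              + s * (d₂ s * (d₁ x * star y) + s * (d₁ x * d₂ (star y))))
            + (s * (d₂ s * (d₁ x * star y) + s * (d₁ x * d₂ (star y)))
              + s * (d₂ s * (d₁ x * star y) + s * (d₁ x * d₂ (star y))))) * r
          = r * _ := fun r => by
        have h := h3 r
        rwa [e] at h
      have h5 := st11_strip2 h2tor _ h4
      have h6 := st11_strip2 h2tor _ h5
      exact st11_stripC hprime s _ hs_c hs0 h6
    -- Step 4: A-identity
    have hA : ∀ x y : R, ∀ r : R,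
        (d₂ s * (d₁ x * star y)) * r = r * (d₂ s * (d₁ x * star y)) := by
      intro x y
      have h1 := st11_CmulC hs_c (hF x y)
      have h2 := hF x (s * y)
      have h3 := st11_Cadd h1 h2
      have e : s * (d₂ s * (d₁ x * star y) + s * (d₁ x * d₂ (star y)))
          + (d₂ s * (d₁ x * star (s * y)) + s * (d₁ x * d₂ (star (s * y))))
          = -(s * (d₂ s * (d₁ x * star y))) := by
        rw [hd₂s y, hstar_s y]
        rw [mul_neg (d₁ x) (s * star y), S1 (d₁ x) (star y)]
        rw [mul_neg (d₂ s), ← O1 (d₁ x * star y)]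
        rw [mul_neg (d₁ x) (d₂ s * star y + s * d₂ (star y)),
          mul_add (d₁ x) (d₂ s * star y) (s * d₂ (star y)),
          A1 (d₁ x) (star y), S1 (d₁ x) (d₂ (star y))]
        noncomm_ring
      have h4 : ∀ r : R, (-(s * (d₂ s * (d₁ x * star y)))) * r
          = r * (-(s * (d₂ s * (d₁ x * star y)))) := fun r => by
        have h := h3 r
        rwa [e] at h
      exact st11_stripC hprime s _ hs_c hs0 (st11_Cofneg h4)
    -- Step 5: P-identity
    have hP : ∀ x y : R, ∀ r : R, (d₁ x * d₂ y) * r = r * (d₁ x * d₂ y) := by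
      intro x y
      have h1 := st11_Csub (hF x (star y)) (hA x (star y))
      have e : (d₂ s * (d₁ x * star (star y)) + s * (d₁ x * d₂ (star (star y))))
          - d₂ s * (d₁ x * star (star y)) = s * (d₁ x * d₂ y) := by
        rw [star_star]; abel
      have h4 : ∀ r : R, (s * (d₁ x * d₂ y)) * r = r * (s * (d₁ x * d₂ y)) := fun r => by
        have h := h1 r
        rwa [e] at h
      exact st11_stripC hprime s _ hs_c hs0 h4
    -- Step 6: a = d₁ x₀, Posner-style argument
    obtain ⟨x₀, ha0⟩ := hd₁_ne
    have hPa : ∀ y : R, ∀ r : R, (d₁ x₀ * d₂ y) * r = r * (d₁ x₀ * d₂ y) := hP x₀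
    -- ∗b : [a y d₂ r, r] = 0
    have hb : ∀ y r : R, (d₁ x₀ * (y * d₂ r)) * r = r * (d₁ x₀ * (y * d₂ r)) := by
      intro y r
      have hlin : (d₁ x₀ * d₂ y * r + d₁ x₀ * (y * d₂ r)) * r
          = r * (d₁ x₀ * d₂ y * r + d₁ x₀ * (y * d₂ r)) := by
        have h := hPa (y * r) r
        have e : d₁ x₀ * d₂ (y * r) = d₁ x₀ * d₂ y * r + d₁ x₀ * (y * d₂ r) := by
          rw [hd₂_mul]; noncomm_ring
        rwa [e] at h
      have e2 : r * (d₁ x₀ * d₂ y * r) = (d₁ x₀ * d₂ y * r) * r := by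
        rw [← mul_assoc, ← hPa y r]
      rw [add_mul, mul_add, e2] at hlin
      exact add_left_cancel hlin
    -- key dichotomy
    have hkey : ∀ r : R, d₁ x₀ * d₂ r = 0 ∨ ∀ z : R, r * z = z * r := by
      intro r
      by_cases h0 : d₁ x₀ * d₂ r = 0
      · exact Or.inl h0
      right
      have hcc : ∀ t : R, (d₁ x₀ * d₂ r) * t = t * (d₁ x₀ * d₂ r) := hPa r
      -- hq : [y d₂ r, r] = 0 for all y
      have hq : ∀ y : R, (y * d₂ r) * r = r * (y * d₂ r) := by
        intro y
        have h := hb (d₂ r * y) r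
        have e1 : d₁ x₀ * ((d₂ r * y) * d₂ r) = (d₁ x₀ * d₂ r) * (y * d₂ r) := by
          noncomm_ring
        rw [e1] at h
        have e2 : r * ((d₁ x₀ * d₂ r) * (y * d₂ r))
            = (d₁ x₀ * d₂ r) * (r * (y * d₂ r)) := by
          rw [← mul_assoc, ← hcc r, mul_assoc]
        rw [mul_assoc, e2] at h
        have e3 : (d₁ x₀ * d₂ r) * ((y * d₂ r) * r - r * (y * d₂ r)) = 0 := by
          rw [mul_sub, h, sub_self]
        exact sub_eq_zero.mp (st11_czero hprime _ _ hcc h0 e3)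
      intro z
      have h5 : ∀ y : R, (r * z - z * r) * y * d₂ r = 0 := by
        intro y
        have h6 := hq (z * y)
        have h7 := congrArg (z * ·) (hq y)
        have e4 : (z * y) * d₂ r * r = z * ((y * d₂ r) * r) := by noncomm_ring
        have e5 : r * ((z * y) * d₂ r) = (r * z) * (y * d₂ r) := by noncomm_ring
        have e6 : z * (r * (y * d₂ r)) = (z * r) * (y * d₂ r) := by noncomm_ring
        rw [e4, e5] at h6
        rw [e6] at h7
        have : (r * z) * (y * d₂ r) = (z * r) * (y * d₂ r) := by
          rw [← h6, h7]
        have : (r * z - z * r) * (y * d₂ r) = 0 := by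
          rw [sub_mul, this, sub_self]
        rw [← mul_assoc] at this
        exact this
      rcases hprime (r * z - z * r) (d₂ r) h5 with h8 | h8
      · exact (sub_eq_zero.mp h8)
      · exact absurd (by rw [h8, mul_zero]) h0
    -- commutativity
    have hcomm : ∀ u v : R, u * v = v * u := by
      by_contra hcon
      push_neg at hcon
      obtain ⟨u, v, huv⟩ := hcon
      have hu : d₁ x₀ * d₂ u = 0 := by
        rcases hkey u with h | h
        · exact h
        · exact absurd (h v) huv
      have hK : ∀ r : R, d₁ x₀ * d₂ r = 0 := by
        intro r
        rcases hkey r with h | h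
        · exact h
        rcases hkey (u + r) with h' | h'
        · have := hd₂_add u r
          have e : d₁ x₀ * d₂ r = d₁ x₀ * d₂ (u + r) - d₁ x₀ * d₂ u := by
            rw [this, mul_add]; abel
          rw [e, h', hu, sub_zero]
        · exfalso
          apply huv
          have h9 := h' v
          have h10 := h v
          calc u * v = (u + r) * v - r * v := by noncomm_ring
            _ = v * (u + r) - v * r := by rw [h9, h10]
            _ = v * u := by noncomm_ring
      have hax : ∀ x y : R, d₁ x₀ * x * d₂ y = 0 := by
        intro x y
        have h := hK (x * y)
        rw [hd₂_mul, mul_add, ← mul_assoc, hK x, zero_mul, zero_add, ← mul_assoc] at h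
        exact h
      obtain ⟨y₀, hy₀⟩ := hd₂_ne
      rcases hprime (d₁ x₀) (d₂ y₀) (fun r => hax r y₀) with h | h
      · exact ha0 h
      · exact hy₀ h
    refine ⟨h01, hcomm, ?_⟩
    intro a b hab
    exact hprime a b (fun r => by rw [mul_assoc, hcomm r b, ← mul_assoc, hab, zero_mul])
  · rintro ⟨h01, hcomm, hdom⟩ x r
    exact hcomm _ _
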